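/- Let γ ∈ [-3,-2] and let q > 3/(5+γ) with q < ∞, and denote q' = q/(q−1). Then there is a constant C > 0 depending only on γ and q such that for every nonnegative f ∈ L¹(ℝ³) ∩ L^q(ℝ³) and every v ∈ ℝ³: ∫_{ℝ³} |w|^{γ+2} f(v−w) dw ≤ C ‖f‖_{L^q(ℝ³)}^{−q'(γ+2)/3} ‖f‖_{L¹(ℝ³)}^{1 + q'(γ+2)/3}. -/

import Mathlib

open MeasureTheory Real
open scoped ENNReal NNReal

noncomputable section

/-- Velocity/position space `ℝ³` with the Euclidean structure. -/
abbrev E3 : Type := EuclideanSpace ℝ (Fin 3)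

/-- Partial derivative of `g : E3 → ℝ` in the `i`-th coordinate direction. -/
def pd (g : E3 → ℝ) (i : Fin 3) (v : E3) : ℝ :=
  fderiv ℝ g v (EuclideanSpace.single i 1)

/-- Divergence of a vector field on `E3`. -/
def divV (F : E3 → Fin 3 → ℝ) (v : E3) : ℝ :=
  ∑ i, pd (fun u => F u i) i v

/-- Entries of the projection matrix `Π(w) = I - w ⊗ w / |w|²`. -/
def projMat (w : E3) (i j : Fin 3) : ℝ :=
  (if i = j then (1 : ℝ) else 0) - w i * w j / ‖w‖ ^ 2

/-- Landau diffusion matrix `ā^f(v)`, entry `(i,j)`. -/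
def aBar (γ aγ : ℝ) (g : E3 → ℝ) (v : E3) (i j : Fin 3) : ℝ :=
  aγ * ∫ w : E3, ‖w‖ ^ (γ + 2) * projMat w i j * g (v - w)

/-- Landau drift coefficient `b̄^f(v)`, component `i`. -/
def bBar (γ bγ : ℝ) (g : E3 → ℝ) (v : E3) (i : Fin 3) : ℝ :=
  bγ * ∫ w : E3, ‖w‖ ^ γ * w i * g (v - w)

/-- Landau zeroth-order coefficient `c̄^f(v)` (equal to `f` itself when `γ = -3`). -/
def cBar (γ cγ : ℝ) (g : E3 → ℝ) (v : E3) : ℝ :=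
  if γ = -3 then g v else cγ * ∫ w : E3, ‖w‖ ^ γ * g (v - w)

/-- Transport derivative `∂_t g + v · ∇_x g`. -/
def transportD (g : ℝ → E3 → E3 → ℝ) (t : ℝ) (x v : E3) : ℝ :=
  deriv (fun s => g s x v) t + ∑ i, v i * pd (fun y => g t y v) i x

/-- Right-hand side `∇_v·(ā^g ∇_v g) + b̄^g·∇_v g + c̄^g g` of the Landau equation,
for `g = f(t,x,·)`. -/
def landauRHS (γ aγ bγ cγ : ℝ) (g : E3 → ℝ) (v : E3) : ℝ :=
  divV (fun u i => ∑ j, aBar γ aγ g u i j * pd g j u) v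
    + (∑ i, bBar γ bγ g v i * pd g i v) + cBar γ cγ g v * g v

/-- `f` is a classical solution of the Landau equation on `D ⊆ ℝ_t × ℝ³_x × ℝ³_v`:
nonnegative, C¹ in `(t,x)`, C² in `v`, satisfying the equation pointwise on `D`. -/
structure IsLandauSolution (γ aγ bγ cγ : ℝ) (D : Set (ℝ × E3 × E3))
    (f : ℝ → E3 → E3 → ℝ) : Prop where
  nonneg : ∀ t x v, (t, x, v) ∈ D → 0 ≤ f t x v
  c1_tx : ∀ t x v, (t, x, v) ∈ D → ContDiffAt ℝ 1 (fun p : ℝ × E3 => f p.1 p.2 v) (t, x)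
  c2_v : ∀ t x v, (t, x, v) ∈ D → ContDiffAt ℝ 2 (fun u => f t x u) v
  eqn : ∀ t x v, (t, x, v) ∈ D →
    transportD f t x v = landauRHS γ aγ bγ cγ (f t x) v

/-- The kinetic cylinder `Q_r(t₀,x₀,v₀)`. -/
def Qcyl (r t₀ : ℝ) (x₀ v₀ : E3) : Set (ℝ × E3 × E3) :=
  {z | t₀ - r ^ 2 < z.1 ∧ z.1 ≤ t₀ ∧
    ‖z.2.1 - x₀ - (z.1 - t₀) • v₀‖ < r ^ 3 ∧ ‖z.2.2 - v₀‖ < r}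

section AuxConvBound
open Set Metric

lemma kernel_meas (s : ℝ) : Measurable fun x : E3 => ENNReal.ofReal (‖x‖ ^ s) := by fun_prop

lemma I1_lt_top {s : ℝ} (hs : -3 < s) (hs0 : s ≤ 0) :
    (∫⁻ x : E3 in ball 0 1, ENNReal.ofReal (‖x‖ ^ s)) < ∞ := by
  rcases eq_or_lt_of_le hs0 with h0 | hneg
  · simp only [h0, Real.rpow_zero]
    simpa using measure_ball_lt_top (x := (0:E3)) (r := 1)
  set μ : Measure E3 := volume.restrict (ball (0:E3) 1) with hμ
  have hnn : 0 ≤ᵐ[μ] fun x : E3 => ‖x‖ ^ s :=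
    ae_of_all _ fun x => Real.rpow_nonneg (norm_nonneg _) s
  have hmble : AEMeasurable (fun x : E3 => ‖x‖ ^ s) μ := by fun_prop
  rw [lintegral_eq_lintegral_meas_le μ hnn hmble]
  have hsplit : ∫⁻ t in Ioi (0:ℝ), μ {a | t ≤ ‖a‖ ^ s} ≤
      (∫⁻ t in Ioc (0:ℝ) 1, μ {a | t ≤ ‖a‖ ^ s}) + ∫⁻ t in Ioi (1:ℝ), μ {a | t ≤ ‖a‖ ^ s} :=
    le_trans (lintegral_mono_set Ioi_subset_Ioc_union_Ioi) (lintegral_union_le _ _ _)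
  refine lt_of_le_of_lt hsplit (ENNReal.add_lt_top.2 ⟨?_, ?_⟩)
  · calc (∫⁻ t in Ioc (0:ℝ) 1, μ {a | t ≤ ‖a‖ ^ s})
        ≤ ∫⁻ _ in Ioc (0:ℝ) 1, volume (ball (0:E3) 1) := by
          refine setLIntegral_mono' measurableSet_Ioc fun t _ => ?_
          exact le_trans (measure_mono (subset_univ _))
            (by rw [hμ, Measure.restrict_apply_univ])
      _ < ∞ := by
          rw [setLIntegral_const]
          exact ENNReal.mul_lt_top measure_ball_lt_top (measure_Ioc_lt_top)
  · have hbound : ∀ t ∈ Ioi (1:ℝ), μ {a | t ≤ ‖a‖ ^ s} ≤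
        ENNReal.ofReal (t ^ (3 / s)) * volume (ball (0:E3) 1) := by
      intro t ht
      have ht0 : (0:ℝ) < t := lt_trans one_pos ht
      have hsub : {a : E3 | t ≤ ‖a‖ ^ s} ⊆ closedBall (0:E3) (t ^ s⁻¹) := by
        intro a ha
        simp only [mem_setOf_eq] at ha
        have hna : 0 < ‖a‖ := by
          rcases eq_or_lt_of_le (norm_nonneg a) with h | h
          · exfalso
            rw [← h, Real.zero_rpow hneg.ne] at ha
            linarith
          · exact h
        have h2 := Real.rpow_le_rpow_of_nonpos ht0 ha (inv_nonpos.2 hneg.le)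
        rw [← Real.rpow_mul hna.le, mul_inv_cancel₀ hneg.ne, Real.rpow_one] at h2
        rwa [mem_closedBall_zero_iff]
      calc μ {a : E3 | t ≤ ‖a‖ ^ s} ≤ volume (closedBall (0:E3) (t ^ s⁻¹)) :=
            le_trans (Measure.restrict_le_self _) (measure_mono hsub)
        _ = ENNReal.ofReal ((t ^ s⁻¹) ^ (Module.finrank ℝ E3)) * volume (ball (0:E3) 1) :=
            Measure.addHaar_closedBall _ _ (Real.rpow_nonneg ht0.le _)
        _ = ENNReal.ofReal (t ^ (3 / s)) * volume (ball (0:E3) 1) := by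
            congr 1
            rw [← Real.rpow_natCast (t ^ s⁻¹), ← Real.rpow_mul ht0.le]
            norm_num [div_eq_inv_mul, mul_comm]
      done
    calc (∫⁻ t in Ioi (1:ℝ), μ {a | t ≤ ‖a‖ ^ s})
        ≤ ∫⁻ t in Ioi (1:ℝ), ENNReal.ofReal (t ^ (3 / s)) * volume (ball (0:E3) 1) :=
          setLIntegral_mono' measurableSet_Ioi hbound
      _ = (∫⁻ t in Ioi (1:ℝ), ENNReal.ofReal (t ^ (3 / s))) * volume (ball (0:E3) 1) := by
          rw [lintegral_mul_const'' _ (by fun_prop)]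
      _ < ∞ := by
          refine ENNReal.mul_lt_top ?_ measure_ball_lt_top
          refine IntegrableOn.setLIntegral_lt_top ?_
          refine integrableOn_Ioi_rpow_of_lt ?_ one_pos
          rw [div_lt_iff_of_neg hneg]
          linarith

lemma I_ball_scale (s : ℝ) {R : ℝ} (hR : 0 < R) :
    (∫⁻ x : E3 in ball 0 R, ENNReal.ofReal (‖x‖ ^ s))
      = ENNReal.ofReal (R ^ (s + 3)) * ∫⁻ x : E3 in ball 0 1, ENNReal.ofReal (‖x‖ ^ s) := by
  set g : E3 → ℝ≥0∞ := fun x => (ball (0:E3) R).indicator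
      (fun x => ENNReal.ofReal (‖x‖ ^ s)) x with hg_def
  have hg : Measurable g := (kernel_meas s).indicator measurableSet_ball
  have hmap := Measure.map_addHaar_smul (volume : Measure E3) (r := R) hR.ne'
  have h1 : ∫⁻ x, g x ∂(Measure.map (R • ·) (volume : Measure E3)) = ∫⁻ x, g (R • x) :=
    lintegral_map hg (measurable_const_smul R)
  rw [hmap, lintegral_smul_measure] at h1
  have h2 : ∀ x : E3, g (R • x) = ENNReal.ofReal (R ^ s) *
      (ball (0:E3) 1).indicator (fun x => ENNReal.ofReal (‖x‖ ^ s)) x := by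
    intro x
    by_cases hx : x ∈ ball (0:E3) 1
    · have hxR : R • x ∈ ball (0:E3) R := by
        rw [mem_ball_zero_iff] at hx ⊢
        rw [norm_smul, Real.norm_eq_abs, abs_of_pos hR]
        calc R * ‖x‖ < R * 1 := by exact mul_lt_mul_of_pos_left hx hR
          _ = R := mul_one R
      rw [hg_def]
      simp only [indicator_of_mem hxR, indicator_of_mem hx]
      rw [norm_smul, Real.norm_eq_abs, abs_of_pos hR,
        Real.mul_rpow hR.le (norm_nonneg x), ENNReal.ofReal_mul (Real.rpow_nonneg hR.le s)]
    · have hxR : R • x ∉ ball (0:E3) R := by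
        rw [mem_ball_zero_iff] at hx ⊢
        rw [norm_smul, Real.norm_eq_abs, abs_of_pos hR]
        intro h
        exact hx ((mul_lt_iff_lt_one_right hR).mp h)
      rw [hg_def]
      simp only [indicator_of_notMem hxR, indicator_of_notMem hx, mul_zero]
  simp only [h2] at h1
  rw [lintegral_const_mul _ ((kernel_meas s).indicator measurableSet_ball)] at h1
  have hRR : ENNReal.ofReal (R ^ (3:ℕ)) * ENNReal.ofReal |(R ^ (3:ℕ))⁻¹| = 1 := by
    rw [← ENNReal.ofReal_mul (by positivity), abs_of_pos (by positivity),
      mul_inv_cancel₀ (by positivity), ENNReal.ofReal_one]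
  have hfin : Module.finrank ℝ E3 = 3 := by simp
  rw [hfin] at h1
  calc (∫⁻ x : E3 in ball 0 R, ENNReal.ofReal (‖x‖ ^ s))
      = ∫⁻ x, g x := (lintegral_indicator measurableSet_ball _).symm
    _ = (ENNReal.ofReal (R ^ (3:ℕ)) * ENNReal.ofReal |(R ^ (3:ℕ))⁻¹|) * ∫⁻ x, g x := by
        rw [hRR, one_mul]
    _ = ENNReal.ofReal (R ^ (3:ℕ)) * (ENNReal.ofReal |(R ^ (3:ℕ))⁻¹| * ∫⁻ x, g x) := by
        ring
    _ = ENNReal.ofReal (R ^ (3:ℕ)) * (ENNReal.ofReal (R ^ s) *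
        ∫⁻ x, (ball (0:E3) 1).indicator (fun x => ENNReal.ofReal (‖x‖ ^ s)) x) := by
        rw [← h1, smul_eq_mul]
    _ = ENNReal.ofReal (R ^ (s + 3)) * ∫⁻ x : E3 in ball 0 1, ENNReal.ofReal (‖x‖ ^ s) := by
        rw [lintegral_indicator measurableSet_ball, ← mul_assoc,
          ← ENNReal.ofReal_mul (by positivity)]
        congr 2
        rw [Real.rpow_add hR, mul_comm, ← Real.rpow_natCast R 3]
        norm_num

end AuxConvBound

/-- the convolution estimate
`(|·|^{γ+2} ∗ f)(v) ≤ C ‖f‖_{L^q}^{−q'(γ+2)/3} ‖f‖_{L¹}^{1+q'(γ+2)/3}` for nonnegative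
`f ∈ L¹ ∩ L^q(ℝ³)` with `q > 3/(5+γ)`, where `q' = q/(q−1)`. -/
theorem convolution_bound_gamma_plus_two
    (γ q : ℝ) (hγ : γ ∈ Set.Icc (-3 : ℝ) (-2)) (hq : 3 / (5 + γ) < q) :
    ∃ C : ℝ, 0 < C ∧ ∀ f : E3 → ℝ,
      (∀ v, 0 ≤ f v) →
      MemLp f 1 volume → MemLp f (ENNReal.ofReal q) volume →
      ∀ v : E3,
        (∫⁻ w : E3, ENNReal.ofReal (‖w‖ ^ (γ + 2) * f (v - w))) ≤
          ENNReal.ofReal (C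
            * (eLpNorm f (ENNReal.ofReal q) volume).toReal ^ (-(q / (q - 1)) * (γ + 2) / 3)
            * (eLpNorm f 1 volume).toReal ^ (1 + (q / (q - 1)) * (γ + 2) / 3)) := by
  obtain ⟨hγl, hγu⟩ := hγ
  have h5γ : (0:ℝ) < 5 + γ := by linarith
  have hq1 : 1 < q := by
    have h1 : (1:ℝ) ≤ 3 / (5 + γ) := by
      rw [le_div_iff₀ h5γ]; linarith
    linarith
  have hq0 : (0:ℝ) < q := by linarith
  have hq1' : (0:ℝ) < q - 1 := by linarith
  set p' : ℝ := q / (q - 1) with hp'_def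
  have hpq : p'.HolderConjugate q := (Real.HolderConjugate.conjExponent hq1).symm
  have hp'0 : 0 < p' := hpq.pos
  set s : ℝ := (γ + 2) * p' with hs_def
  have hs0 : s ≤ 0 := mul_nonpos_of_nonpos_of_nonneg (by linarith) hp'0.le
  have hs3 : -3 < s := by
    have h3q : 3 < q * (5 + γ) := (div_lt_iff₀ h5γ).mp hq
    rw [hs_def, hp'_def, ← mul_div_assoc, lt_div_iff₀ hq1']
    nlinarith
  set I1 := ∫⁻ x : E3 in Metric.ball (0:E3) 1, ENNReal.ofReal (‖x‖ ^ s) with hI1_def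
  have hI1top : I1 < ∞ := I1_lt_top hs3 hs0
  have hcfin : I1 ^ (1 / p') ≠ ∞ :=
    (ENNReal.rpow_lt_top_of_nonneg (by positivity) hI1top.ne).ne
  set c : ℝ := (I1 ^ (1 / p')).toReal with hc_def
  have hc0 : 0 ≤ c := ENNReal.toReal_nonneg
  refine ⟨c + 1, by positivity, ?_⟩
  intro f hfnn hf1 hfq v
  have hT := Measure.measurePreserving_sub_left (volume : Measure E3) v
  by_cases hzero : f =ᵐ[volume] 0
  · have hz : (fun w : E3 => f (v - w)) =ᵐ[volume] (fun _ => 0) :=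
      hT.quasiMeasurePreserving.ae_eq_comp hzero
    have h0 : (∫⁻ w : E3, ENNReal.ofReal (‖w‖ ^ (γ + 2) * f (v - w))) = 0 := by
      have he : (fun w : E3 => ENNReal.ofReal (‖w‖ ^ (γ + 2) * f (v - w)))
          =ᵐ[volume] (fun _ => 0) := by
        filter_upwards [hz] with w hw
        simp [hw]
      rw [lintegral_congr_ae he, lintegral_zero]
    rw [h0]; exact zero_le
  have hmf := hf1.aestronglyMeasurable
  have hfae : AEMeasurable f volume := hmf.aemeasurable
  have hq_ne_zero : (ENNReal.ofReal q) ≠ 0 := (ENNReal.ofReal_pos.mpr hq0).ne'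
  have hN1top : eLpNorm f 1 volume < ∞ := hf1.2
  have hNqtop : eLpNorm f (ENNReal.ofReal q) volume < ∞ := hfq.2
  have hN1ne : eLpNorm f 1 volume ≠ 0 := by
    rw [ne_eq, eLpNorm_eq_zero_iff hmf one_ne_zero]; exact hzero
  have hNqne : eLpNorm f (ENNReal.ofReal q) volume ≠ 0 := by
    rw [ne_eq, eLpNorm_eq_zero_iff hmf hq_ne_zero]; exact hzero
  set n1 := (eLpNorm f 1 volume).toReal with hn1_def
  set nq := (eLpNorm f (ENNReal.ofReal q) volume).toReal with hnq_def
  have hn1 : 0 < n1 := ENNReal.toReal_pos hN1ne hN1top.ne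
  have hnq : 0 < nq := ENNReal.toReal_pos hNqne hNqtop.ne
  set R : ℝ := (n1 / nq) ^ (p' / 3) with hR_def
  have hR : 0 < R := Real.rpow_pos_of_pos (div_pos hn1 hnq) _
  set K : E3 → ℝ≥0∞ := fun w => ENNReal.ofReal (‖w‖ ^ (γ + 2)) with hK_def
  set F : E3 → ℝ≥0∞ := fun w => ENNReal.ofReal (f (v - w)) with hF_def
  have hK : Measurable K := kernel_meas _
  have hofae : AEMeasurable (fun u : E3 => ENNReal.ofReal (f u)) volume :=
    ENNReal.measurable_ofReal.comp_aemeasurable hfae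
  have hFae : AEMeasurable F volume :=
    hofae.comp_quasiMeasurePreserving hT.quasiMeasurePreserving
  have htrans : ∀ G : E3 → ℝ≥0∞, AEMeasurable G volume →
      (∫⁻ w : E3, G (v - w)) = ∫⁻ u : E3, G u := by
    intro G hG
    calc (∫⁻ w : E3, G (v - w))
        = ∫⁻ u, G u ∂(Measure.map (fun w : E3 => v - w) volume) :=
          (lintegral_map' (by rwa [hT.map_eq]) hT.measurable.aemeasurable).symm
      _ = ∫⁻ u : E3, G u := by rw [hT.map_eq]
  have hL1 : (∫⁻ u : E3, ENNReal.ofReal (f u)) = ENNReal.ofReal n1 := by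
    rw [hn1_def, ENNReal.ofReal_toReal hN1top.ne, eLpNorm_one_eq_lintegral_enorm]
    exact lintegral_congr fun u => by rw [Real.enorm_eq_ofReal (hfnn u)]
  have hLq : (∫⁻ u : E3, (ENNReal.ofReal (f u)) ^ q) ^ (1/q) = ENNReal.ofReal nq := by
    rw [hnq_def, ENNReal.ofReal_toReal hNqtop.ne,
      eLpNorm_eq_lintegral_rpow_enorm_toReal hq_ne_zero ENNReal.ofReal_ne_top,
      ENNReal.toReal_ofReal hq0.le]
    congr 1
    exact lintegral_congr fun u => by rw [Real.enorm_eq_ofReal (hfnn u)]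
  -- near part
  have hKp : ∀ w : E3, K w ^ p' = ENNReal.ofReal (‖w‖ ^ s) := by
    intro w
    rw [hK_def, ENNReal.ofReal_rpow_of_nonneg (Real.rpow_nonneg (norm_nonneg _) _) hpq.nonneg,
      ← Real.rpow_mul (norm_nonneg w), ← hs_def]
  have hnear : (∫⁻ w in Metric.ball (0:E3) R, K w * F w) ≤
      ENNReal.ofReal (c * (R ^ ((s + 3) / p') * nq)) := by
    have hH := ENNReal.lintegral_mul_le_Lp_mul_Lq (volume.restrict (Metric.ball (0:E3) R)) hpq
      hK.aemeasurable hFae.restrict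
    have hFq : (∫⁻ w in Metric.ball (0:E3) R, F w ^ q) ^ (1/q) ≤ ENNReal.ofReal nq := by
      rw [← hLq]
      refine ENNReal.rpow_le_rpow ?_ (by positivity)
      calc (∫⁻ w in Metric.ball (0:E3) R, F w ^ q) ≤ ∫⁻ w : E3, F w ^ q :=
            setLIntegral_le_lintegral _ _
        _ = ∫⁻ u : E3, (ENNReal.ofReal (f u)) ^ q := by
            refine htrans (fun u => (ENNReal.ofReal (f u)) ^ q) ?_
            exact ENNReal.continuous_rpow_const.measurable.comp_aemeasurable hofae
    have hKq : (∫⁻ w in Metric.ball (0:E3) R, K w ^ p') ^ (1/p') =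
        ENNReal.ofReal (R ^ ((s + 3) / p') * c) := by
      have h1 : (∫⁻ w in Metric.ball (0:E3) R, K w ^ p') = ENNReal.ofReal (R ^ (s + 3)) * I1 := by
        simp only [hKp]
        rw [I_ball_scale s hR, hI1_def]
      rw [h1, ENNReal.mul_rpow_of_nonneg _ _ (by positivity),
        ENNReal.ofReal_rpow_of_nonneg (by positivity) (by positivity),
        ← Real.rpow_mul hR.le, mul_one_div, ENNReal.ofReal_mul (by positivity)]
      congr 1
      rw [hc_def, ENNReal.ofReal_toReal hcfin]
    calc (∫⁻ w in Metric.ball (0:E3) R, K w * F w)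
        ≤ (∫⁻ w in Metric.ball (0:E3) R, K w ^ p') ^ (1/p') *
            (∫⁻ w in Metric.ball (0:E3) R, F w ^ q) ^ (1/q) := hH
      _ ≤ ENNReal.ofReal (R ^ ((s + 3) / p') * c) * ENNReal.ofReal nq := by
          rw [hKq]; exact mul_le_mul_right hFq _
      _ = ENNReal.ofReal (c * (R ^ ((s + 3) / p') * nq)) := by
          rw [← ENNReal.ofReal_mul (by positivity)]
          congr 1; ring
  -- far part
  have hfar : (∫⁻ w in (Metric.ball (0:E3) R)ᶜ, K w * F w) ≤ ENNReal.ofReal (R ^ (γ + 2) * n1) := by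
    calc (∫⁻ w in (Metric.ball (0:E3) R)ᶜ, K w * F w)
        ≤ ∫⁻ w in (Metric.ball (0:E3) R)ᶜ, ENNReal.ofReal (R ^ (γ + 2)) * F w := by
          refine setLIntegral_mono' measurableSet_ball.compl fun w hw => ?_
          have hwR : R ≤ ‖w‖ := by
            rw [Set.mem_compl_iff, mem_ball_zero_iff, not_lt] at hw; exact hw
          exact mul_le_mul_left
            (ENNReal.ofReal_le_ofReal (Real.rpow_le_rpow_of_nonpos hR hwR (by linarith))) _
      _ ≤ ∫⁻ w : E3, ENNReal.ofReal (R ^ (γ + 2)) * F w := setLIntegral_le_lintegral _ _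
      _ = ENNReal.ofReal (R ^ (γ + 2)) * ∫⁻ w : E3, F w :=
          lintegral_const_mul' _ _ ENNReal.ofReal_ne_top
      _ = ENNReal.ofReal (R ^ (γ + 2)) * ENNReal.ofReal n1 := by
          rw [hF_def]
          rw [htrans (fun u => ENNReal.ofReal (f u)) hofae, hL1]
      _ = ENNReal.ofReal (R ^ (γ + 2) * n1) := (ENNReal.ofReal_mul (by positivity)).symm
  -- arithmetic
  have key1 : R ^ ((s + 3) / p') * nq = R ^ (γ + 2) * n1 := by
    have h1 : (s + 3) / p' = (γ + 2) + 3 / p' := by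
      rw [hs_def]; field_simp
    rw [h1, Real.rpow_add hR, mul_assoc]
    congr 1
    rw [hR_def, ← Real.rpow_mul (div_pos hn1 hnq).le]
    have h2 : p' / 3 * (3 / p') = 1 := by
      field_simp
    rw [h2, Real.rpow_one, div_mul_cancel₀ _ hnq.ne']
  have key2 : R ^ (γ + 2) * n1 = nq ^ (-p' * (γ + 2) / 3) * n1 ^ (1 + p' * (γ + 2) / 3) := by
    rw [hR_def, ← Real.rpow_mul (div_pos hn1 hnq).le, Real.div_rpow hn1.le hnq.le,
      div_eq_mul_inv, ← Real.rpow_neg hnq.le]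
    have ea : -p' * (γ + 2) / 3 = -(p' / 3 * (γ + 2)) := by ring
    have eb : 1 + p' * (γ + 2) / 3 = p' / 3 * (γ + 2) + 1 := by ring
    rw [ea, eb, Real.rpow_add hn1 _ 1, Real.rpow_one]
    ring
  calc (∫⁻ w : E3, ENNReal.ofReal (‖w‖ ^ (γ + 2) * f (v - w)))
      = ∫⁻ w : E3, K w * F w := lintegral_congr fun w => by
        rw [hK_def, hF_def, ENNReal.ofReal_mul (Real.rpow_nonneg (norm_nonneg _) _)]
    _ = (∫⁻ w in Metric.ball (0:E3) R, K w * F w) + ∫⁻ w in (Metric.ball (0:E3) R)ᶜ, K w * F w :=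
        (lintegral_add_compl _ measurableSet_ball).symm
    _ ≤ ENNReal.ofReal (c * (R ^ ((s + 3) / p') * nq)) + ENNReal.ofReal (R ^ (γ + 2) * n1) :=
        add_le_add hnear hfar
    _ = ENNReal.ofReal ((c + 1) * (R ^ (γ + 2) * n1)) := by
        rw [key1, ← ENNReal.ofReal_add (by positivity) (by positivity)]
        congr 1; ring
    _ = ENNReal.ofReal ((c + 1) * nq ^ (-p' * (γ + 2) / 3) * n1 ^ (1 + p' * (γ + 2) / 3)) := by
        rw [key2]; congr 1; ring
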